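/- Let (R, 𝔪) be a Noetherian local ring, M a nonzero finitely generated R-module, I an 𝔪-primary ideal, and J = I × IM ⊆ R ⋉ M. Then for all n ≥ 0: ℓ_R((I^{n+1}M :_M 𝔪)/I^{n+1}M) ≤ ℓ_{R⋉M}((J^{n+1} :_{R⋉M} (𝔪×M))/J^{n+1}) ≤ ℓ_R((I^{n+1} :_R 𝔪)/I^{n+1}) + ℓ_R((I^{n+1}M :_M 𝔪)/I^{n+1}M). Equivalently, ir_M(I^{n+1}M) ≤ ir_{R⋉M}(J^{n+1}) ≤ ir_R(I^{n+1}) + ir_M(I^{n+1}M). -/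

import Mathlib

open TrivSqZeroExt IsLocalRing


open TrivSqZeroExt

/-- The ideal `I × N` of the idealization `R ⋉ M` (a homogeneous ideal), for an ideal `I`
of `R` and a submodule `N` of `M` with `I M ⊆ N`. -/
def idealProd {R M : Type*} [CommRing R] [AddCommGroup M] [Module R M] [Module Rᵐᵒᵖ M]
    [IsCentralScalar R M] (I : Ideal R) (N : Submodule R M)
    (h : ∀ a ∈ I, ∀ m : M, a • m ∈ N) : Ideal (TrivSqZeroExt R M) where
  carrier := {x | x.fst ∈ I ∧ x.snd ∈ N}
  zero_mem' := ⟨I.zero_mem, N.zero_mem⟩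
  add_mem' := fun ha hb => ⟨I.add_mem ha.1 hb.1, N.add_mem ha.2 hb.2⟩
  smul_mem' := fun c x hx => by
    refine ⟨I.mul_mem_left c.fst hx.1, ?_⟩
    show (c * x).snd ∈ N
    rw [snd_mul, op_smul_eq_smul]
    exact N.add_mem (N.smul_mem _ hx.2) (h x.fst hx.1 c.snd)

/-- The colon submodule `N :_M I = {m ∈ M : I m ⊆ N}`. -/
def modColon {R M : Type*} [CommRing R] [AddCommGroup M] [Module R M]
    (N : Submodule R M) (I : Ideal R) : Submodule R M where
  carrier := {m | ∀ r ∈ I, r • m ∈ N}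
  zero_mem' := fun r _ => by simp
  add_mem' := fun ha hb r hr => by
    rw [smul_add]; exact N.add_mem (ha r hr) (hb r hr)
  smul_mem' := fun c m hm r hr => by
    rw [smul_comm]; exact N.smul_mem c (hm r hr)

/-- The length of an `R`-module `M`: the Krull dimension of its lattice of submodules,
i.e. the supremum of the lengths of chains of submodules of `M`. -/
noncomputable def moduleLength (R M : Type*) [CommRing R] [AddCommGroup M] [Module R M] :
    WithBot ℕ∞ :=
  Order.krullDim (Submodule R M)

/-- The index of reducibility of a submodule `N ⊆ M` of finite colength over the local ring
`(R, 𝔪)`: the length `ℓ_R((N :_M 𝔪)/N)` of the socle of `M/N`. -/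
noncomputable def indexOfReducibility {R M : Type*} [CommRing R] [IsLocalRing R]
    [AddCommGroup M] [Module R M] (N : Submodule R M) : WithBot ℕ∞ :=
  moduleLength R ((modColon N (maximalIdeal R)).map N.mkQ)

instance tszeIsLocalRing {R M : Type*} [CommRing R] [IsLocalRing R] [AddCommGroup M]
    [Module R M] [Module Rᵐᵒᵖ M] [IsCentralScalar R M] :
    IsLocalRing (TrivSqZeroExt R M) := by
  haveI : Nontrivial (TrivSqZeroExt R M) :=
    ⟨⟨0, 1, fun h => zero_ne_one (congrArg TrivSqZeroExt.fst h)⟩⟩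
  refine IsLocalRing.of_isUnit_or_isUnit_of_isUnit_add (fun {a b} h => ?_)
  have hf : IsUnit (a.fst + b.fst) := by
    have := h.map (TrivSqZeroExt.fstHom R R M)
    simpa using this
  rcases IsLocalRing.isUnit_or_isUnit_of_isUnit_add hf with h' | h'
  · left
    rcases h'.nonempty_invertible with ⟨inv⟩
    letI := inv
    letI := TrivSqZeroExt.invertibleOfInvertibleFst a
    exact isUnit_of_invertible a
  · right
    rcases h'.nonempty_invertible with ⟨inv⟩
    letI := inv
    letI := TrivSqZeroExt.invertibleOfInvertibleFst b
    exact isUnit_of_invertible b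


section Aux

open Order

/-! ### Krull dimension of a product order -/

lemma height_add_one_le' {α : Type*} [Preorder α] {a b : α} (h : a < b) :
    Order.height a + 1 ≤ Order.height b := by
  rw [Order.height_eq_iSup_lt_height b]
  exact le_iSup₂ (f := fun y (_ : y < b) => Order.height y + 1) a h

lemma length_le_height_prod {α β : Type*} [Preorder α] [Preorder β] :
    ∀ n (p : LTSeries (α × β)), p.length = n →
      (p.length : ℕ∞) ≤ Order.height p.last.1 + Order.height p.last.2 := by
  intro n
  induction n with
  | zero => intro p hp; simp [hp]
  | succ n ih =>
      intro p hp
      have h0 : p.length ≠ 0 := by omega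
      have hlt : p.eraseLast.last < p.last := p.eraseLast_last_rel_last h0
      have ihe := ih p.eraseLast (by simp [RelSeries.eraseLast_length, hp])
      rw [hp]
      rw [RelSeries.eraseLast_length, hp] at ihe
      simp only [Nat.add_sub_cancel] at ihe
      push_cast
      rcases Prod.lt_iff.mp hlt with ⟨h1, h2⟩ | ⟨h1, h2⟩
      · calc (n : ℕ∞) + 1
            ≤ (Order.height p.eraseLast.last.1 + Order.height p.eraseLast.last.2) + 1 :=
              add_le_add ihe le_rfl
          _ = (Order.height p.eraseLast.last.1 + 1) + Order.height p.eraseLast.last.2 := by ring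
          _ ≤ Order.height p.last.1 + Order.height p.last.2 :=
              add_le_add (height_add_one_le' h1) (Order.height_mono h2)
      · calc (n : ℕ∞) + 1
            ≤ (Order.height p.eraseLast.last.1 + Order.height p.eraseLast.last.2) + 1 :=
              add_le_add ihe le_rfl
          _ = Order.height p.eraseLast.last.1 + (Order.height p.eraseLast.last.2 + 1) := by ring
          _ ≤ Order.height p.last.1 + Order.height p.last.2 :=
              add_le_add (Order.height_mono h1) (height_add_one_le' h2)

lemma krullDim_prod_le {α β : Type*} [Preorder α] [Preorder β] [Nonempty α] [Nonempty β] :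
    Order.krullDim (α × β) ≤ Order.krullDim α + Order.krullDim β := by
  rw [Order.krullDim_eq_iSup_length (α := α × β),
    Order.krullDim_eq_iSup_height_of_nonempty (α := α),
    Order.krullDim_eq_iSup_height_of_nonempty (α := β), ← WithBot.coe_add, WithBot.coe_le_coe]
  refine iSup_le fun p => ?_
  calc (p.length : ℕ∞) ≤ Order.height p.last.1 + Order.height p.last.2 :=
        length_le_height_prod p.length p rfl
    _ ≤ (⨆ a : α, Order.height a) + (⨆ b : β, Order.height b) :=
        add_le_add (le_iSup _ _) (le_iSup _ _)

/-! ### The index of reducibility as the Krull dimension of an interval -/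

lemma le_modColon {R M : Type*} [CommRing R] [AddCommGroup M] [Module R M]
    (N : Submodule R M) (I : Ideal R) : N ≤ modColon N I :=
  fun _m hm r _ => N.smul_mem r hm

lemma krullDim_submodule_map_mkQ {R M : Type*} [CommRing R] [AddCommGroup M] [Module R M]
    (N C : Submodule R M) (hNC : N ≤ C) :
    Order.krullDim (Submodule R ↥(C.map N.mkQ)) = Order.krullDim (Set.Icc N C) := by
  apply le_antisymm
  · apply Order.krullDim_le_of_strictMono
      (f := fun q => (⟨Submodule.comap N.mkQ
          ((Submodule.MapSubtype.orderIso _ q : _) : Submodule R (M ⧸ N)),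
        Submodule.le_comap_mkQ N _,
        by
          refine le_trans (Submodule.comap_mono (Submodule.MapSubtype.orderIso _ q).2) ?_
          rw [Submodule.comap_map_mkQ, sup_eq_right.mpr hNC]⟩ : Set.Icc N C))
    intro q q' hqq'
    have h1 : ((Submodule.MapSubtype.orderIso (C.map N.mkQ)) q : Submodule R (M ⧸ N)) <
        ((Submodule.MapSubtype.orderIso (C.map N.mkQ)) q' : Submodule R (M ⧸ N)) :=
      Subtype.coe_lt_coe.mpr ((Submodule.MapSubtype.orderIso _).strictMono hqq')
    refine Subtype.mk_lt_mk.mpr (lt_of_le_of_ne (Submodule.comap_mono h1.le) (fun heq => h1.ne ?_))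
    have hs : Function.Surjective N.mkQ := Submodule.mkQ_surjective N
    have := congrArg (Submodule.map N.mkQ) heq
    rwa [Submodule.map_comap_eq_of_surjective hs, Submodule.map_comap_eq_of_surjective hs] at this
  · apply Order.krullDim_le_of_strictMono
      (f := fun p => (Submodule.MapSubtype.orderIso (C.map N.mkQ)).symm
        ⟨Submodule.map N.mkQ p.1, Submodule.map_mono p.2.2⟩)
    intro p p' hpp'
    apply (Submodule.MapSubtype.orderIso (C.map N.mkQ)).symm.strictMono
    refine Subtype.mk_lt_mk.mpr
      (lt_of_le_of_ne (Submodule.map_mono hpp'.le) (fun heq => hpp'.ne ?_))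
    have := congrArg (Submodule.comap N.mkQ) heq
    rw [Submodule.comap_map_mkQ, Submodule.comap_map_mkQ, sup_eq_right.mpr p.2.1,
      sup_eq_right.mpr p'.2.1] at this
    exact Subtype.ext this

lemma indexOfReducibility_eq_icc {R M : Type*} [CommRing R] [IsLocalRing R] [AddCommGroup M]
    [Module R M] (N : Submodule R M) :
    indexOfReducibility N = Order.krullDim (Set.Icc N (modColon N (maximalIdeal R))) :=
  krullDim_submodule_map_mkQ N _ (le_modColon N _)

/-! ### The idealization -/

variable {R M : Type*} [CommRing R] [AddCommGroup M] [Module R M] [Module Rᵐᵒᵖ M]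
    [IsCentralScalar R M]

lemma mem_idealProd {I : Ideal R} {N : Submodule R M} {h} {x : TrivSqZeroExt R M} :
    x ∈ idealProd I N h ↔ x.fst ∈ I ∧ x.snd ∈ N := Iff.rfl

lemma isUnit_tsze_iff (x : TrivSqZeroExt R M) : IsUnit x ↔ IsUnit x.fst := by
  constructor
  · intro h
    simpa using h.map (TrivSqZeroExt.fstHom R R M)
  · intro h
    rcases h.nonempty_invertible with ⟨inv⟩
    letI := inv
    letI := TrivSqZeroExt.invertibleOfInvertibleFst x
    exact isUnit_of_invertible x

lemma mem_maximalIdeal_tsze [IsLocalRing R] (x : TrivSqZeroExt R M) :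
    x ∈ maximalIdeal (TrivSqZeroExt R M) ↔ x.fst ∈ maximalIdeal R := by
  rw [IsLocalRing.mem_maximalIdeal, IsLocalRing.mem_maximalIdeal, mem_nonunits_iff,
    mem_nonunits_iff, isUnit_tsze_iff]

lemma inl_mem_idealProd_pow (I : Ideal R) (n : ℕ) {a : R} (ha : a ∈ I ^ (n + 1)) :
    (inl a : TrivSqZeroExt R M) ∈
      (idealProd I (I • (⊤ : Submodule R M))
        (fun a ha m => Submodule.smul_mem_smul ha trivial)) ^ (n + 1) := by
  have h1 : (inl a : TrivSqZeroExt R M) ∈ Ideal.map (inlHom R M) (I ^ (n + 1)) :=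
    Ideal.mem_map_of_mem _ ha
  rw [Ideal.map_pow] at h1
  have h2 : Ideal.map (inlHom R M) I ≤
      idealProd I (I • (⊤ : Submodule R M)) (fun a ha m => Submodule.smul_mem_smul ha trivial) := by
    rw [Ideal.map_le_iff_le_comap]
    intro r hr
    exact ⟨by simpa using hr, by simp⟩
  have h3 : ∀ (J K : Ideal (TrivSqZeroExt R M)), J ≤ K → ∀ k, J ^ k ≤ K ^ k := by
    intro J K hJK k
    induction k with
    | zero => simp
    | succ k ih => rw [pow_succ, pow_succ]; exact Ideal.mul_mono ih hJK
  exact h3 _ _ h2 (n + 1) h1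

lemma idealProd_pow (I : Ideal R) (n : ℕ) :
    (idealProd I (I • (⊤ : Submodule R M))
        (fun a ha m => Submodule.smul_mem_smul ha trivial)) ^ (n + 1) =
      idealProd (I ^ (n + 1)) ((I ^ (n + 1)) • (⊤ : Submodule R M))
        (fun a ha m => Submodule.smul_mem_smul ha trivial) := by
  apply le_antisymm
  · induction n with
    | zero =>
        rw [pow_one]
        intro x hx
        exact ⟨by rw [pow_one]; exact hx.1, by rw [pow_one]; exact hx.2⟩
    | succ n ih =>
        rw [pow_succ]
        refine le_trans (Ideal.mul_mono ih le_rfl) ?_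
        rw [Ideal.mul_le]
        intro x hx y hy
        refine ⟨?_, ?_⟩
        · show (x * y).fst ∈ I ^ (n + 2)
          rw [fst_mul, pow_succ]
          exact Ideal.mul_mem_mul hx.1 hy.1
        · show (x * y).snd ∈ (I ^ (n + 2)) • (⊤ : Submodule R M)
          rw [snd_mul, op_smul_eq_smul]
          have e1 : (I ^ (n + 2)) • (⊤ : Submodule R M) =
              (I ^ (n + 1)) • (I • (⊤ : Submodule R M)) := by
            rw [← Submodule.smul_assoc, Ideal.smul_eq_mul, ← pow_succ]
          have e2 : (I ^ (n + 2)) • (⊤ : Submodule R M) =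
              I • ((I ^ (n + 1)) • (⊤ : Submodule R M)) := by
            rw [← Submodule.smul_assoc, Ideal.smul_eq_mul, ← pow_succ']
          refine Submodule.add_mem _ ?_ ?_
          · rw [e1]; exact Submodule.smul_mem_smul hx.1 hy.2
          · rw [e2]; exact Submodule.smul_mem_smul hy.1 hx.2
  · intro x hx
    obtain ⟨h1, h2⟩ := hx
    have hx' : x = inl x.fst + inr x.snd := (inl_fst_add_inr_snd_eq x).symm
    rw [hx']
    refine Ideal.add_mem _ (inl_mem_idealProd_pow I n h1) ?_
    refine Submodule.smul_induction_on h2 (fun r hr m _ => ?_) (fun m1 m2 hm1 hm2 => ?_)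
    · rw [← inl_mul_inr]
      exact Ideal.mul_mem_right _ _ (inl_mem_idealProd_pow I n hr)
    · rw [inr_add]
      exact Ideal.add_mem _ hm1 hm2

/-! ### Projections of an ideal of the idealization -/

/-- The "first component" ideal of an ideal of `R ⋉ M`. -/
def fstProj (X : Ideal (TrivSqZeroExt R M)) : Ideal R where
  carrier := {a | ∃ m : M, (inl a + inr m : TrivSqZeroExt R M) ∈ X}
  zero_mem' := ⟨0, by simpa using X.zero_mem⟩
  add_mem' := by
    rintro a b ⟨m, hm⟩ ⟨m', hm'⟩
    refine ⟨m + m', ?_⟩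
    have : (inl (a + b) + inr (m + m') : TrivSqZeroExt R M) =
        (inl a + inr m) + (inl b + inr m') := by
      rw [inl_add, inr_add]; abel
    rw [this]
    exact X.add_mem hm hm'
  smul_mem' := by
    rintro c a ⟨m, hm⟩
    refine ⟨c • m, ?_⟩
    have : (inl (c • a) + inr (c • m) : TrivSqZeroExt R M) = inl c * (inl a + inr m) := by
      rw [mul_add, inl_mul_inl, inl_mul_inr, smul_eq_mul]
    rw [this]
    exact Ideal.mul_mem_left _ _ hm

/-- The "second component" submodule of an ideal of `R ⋉ M`. -/
def sndProj (X : Ideal (TrivSqZeroExt R M)) : Submodule R M where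
  carrier := {m | (inr m : TrivSqZeroExt R M) ∈ X}
  zero_mem' := by simpa using X.zero_mem
  add_mem' := by
    intro a b ha hb
    show (inr (a + b) : TrivSqZeroExt R M) ∈ X
    rw [inr_add]
    exact X.add_mem ha hb
  smul_mem' := by
    intro c m hm
    show (inr (c • m) : TrivSqZeroExt R M) ∈ X
    rw [← inl_mul_inr]
    exact Ideal.mul_mem_left _ _ hm

lemma fstProj_mono : Monotone (fstProj (R := R) (M := M)) := by
  rintro X Y hXY a ⟨m, hm⟩
  exact ⟨m, hXY hm⟩

lemma sndProj_mono : Monotone (sndProj (R := R) (M := M)) :=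
  fun _X _Y hXY _m hm => hXY hm

lemma eq_of_proj_eq {X Y : Ideal (TrivSqZeroExt R M)} (hle : X ≤ Y)
    (h1 : fstProj X = fstProj Y) (h2 : sndProj X = sndProj Y) : X = Y := by
  refine le_antisymm hle fun z hz => ?_
  have hz1 : z.fst ∈ fstProj Y := ⟨z.snd, by rwa [inl_fst_add_inr_snd_eq]⟩
  rw [← h1] at hz1
  obtain ⟨m', hm'⟩ := hz1
  have hsub : (inr (z.snd - m') : TrivSqZeroExt R M) ∈ Y := by
    have : (inr (z.snd - m') : TrivSqZeroExt R M) = z - (inl z.fst + inr m') := by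
      apply TrivSqZeroExt.ext <;> simp
    rw [this]
    exact Y.sub_mem hz (hle hm')
  have hmem : z.snd - m' ∈ sndProj X := by rw [h2]; exact hsub
  have : z = (inl z.fst + inr m') + inr (z.snd - m') := by
    apply TrivSqZeroExt.ext <;> simp
  rw [this]
  exact X.add_mem hm' hmem

end Aux

/-- `ir_M(I^(n+1)M) ≤ ir_{R⋉M}(J^(n+1)) ≤ ir_R(I^(n+1)) + ir_M(I^(n+1)M)` for all `n ≥ 0`,
where `J = I × IM` and the index of reducibility is the length of the corresponding socle. -/
theorem ir_le_ir_idealization_le (R M : Type*) [CommRing R] [IsNoetherianRing R]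
    [IsLocalRing R] [AddCommGroup M] [Module R M] [Module Rᵐᵒᵖ M] [IsCentralScalar R M]
    [Module.Finite R M] (hM : Nontrivial M) (I : Ideal R)
    (hI : I.IsPrimary ∧ I.radical = maximalIdeal R) (n : ℕ) :
    indexOfReducibility ((I ^ (n + 1)) • (⊤ : Submodule R M)) ≤
        indexOfReducibility
          ((idealProd I (I • (⊤ : Submodule R M))
              (fun a ha m => Submodule.smul_mem_smul ha trivial) : Ideal (TrivSqZeroExt R M)) ^
            (n + 1) : Submodule (TrivSqZeroExt R M) (TrivSqZeroExt R M)) ∧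
      indexOfReducibility
          ((idealProd I (I • (⊤ : Submodule R M))
              (fun a ha m => Submodule.smul_mem_smul ha trivial) : Ideal (TrivSqZeroExt R M)) ^
            (n + 1) : Submodule (TrivSqZeroExt R M) (TrivSqZeroExt R M)) ≤
        indexOfReducibility (I ^ (n + 1) : Submodule R R) +
          indexOfReducibility ((I ^ (n + 1)) • (⊤ : Submodule R M)) := by
  classical
  have hpow := idealProd_pow (M := M) I n
  set P : Ideal R := I ^ (n + 1) with hP
  set PM : Submodule R M := (I ^ (n + 1)) • (⊤ : Submodule R M) with hPM
  set K : Ideal (TrivSqZeroExt R M) :=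
    idealProd (I ^ (n + 1)) ((I ^ (n + 1)) • (⊤ : Submodule R M))
      (fun a ha m => Submodule.smul_mem_smul ha trivial) with hK
  set CA := modColon (K : Submodule (TrivSqZeroExt R M) (TrivSqZeroExt R M))
    (maximalIdeal (TrivSqZeroExt R M)) with hCA
  set Bm := modColon PM (maximalIdeal R) with hBm
  set Br := modColon (P : Submodule R R) (maximalIdeal R) with hBr
  -- the lower-bound map
  have hL : ∃ L : Set.Icc PM Bm →
      Set.Icc (K : Submodule (TrivSqZeroExt R M) (TrivSqZeroExt R M)) CA, StrictMono L := by
    have hlow : ∀ N : Set.Icc PM Bm, (K : Submodule (TrivSqZeroExt R M) (TrivSqZeroExt R M)) ≤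
        idealProd P N.1 (fun a ha m => N.2.1 (Submodule.smul_mem_smul ha trivial)) :=
      fun N x hx => ⟨hx.1, N.2.1 hx.2⟩
    have hup : ∀ N : Set.Icc PM Bm,
        (idealProd P N.1 (fun a ha m => N.2.1 (Submodule.smul_mem_smul ha trivial)) :
          Submodule (TrivSqZeroExt R M) (TrivSqZeroExt R M)) ≤ CA := by
      intro N x hx r hr
      rw [smul_eq_mul]
      refine ⟨?_, ?_⟩
      · show (r * x).fst ∈ (I ^ (n + 1) : Ideal R)
        rw [fst_mul]
        exact Ideal.mul_mem_left _ _ hx.1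
      · show (r * x).snd ∈ (I ^ (n + 1)) • (⊤ : Submodule R M)
        rw [snd_mul, op_smul_eq_smul]
        refine Submodule.add_mem _ ?_ (Submodule.smul_mem_smul hx.1 trivial)
        exact N.2.2 hx.2 r.fst ((mem_maximalIdeal_tsze r).1 hr)
    refine ⟨fun N => ⟨(idealProd P N.1
      (fun a ha m => N.2.1 (Submodule.smul_mem_smul ha trivial)) :
        Submodule (TrivSqZeroExt R M) (TrivSqZeroExt R M)), hlow N, hup N⟩, ?_⟩
    intro N N' hNN'
    have hlt : N.1 < N'.1 := Subtype.coe_lt_coe.mpr hNN'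
    obtain ⟨m, hm', hm⟩ := SetLike.exists_of_lt hlt
    refine Subtype.mk_lt_mk.mpr (lt_of_le_of_ne (fun x hx => ⟨hx.1, hlt.le hx.2⟩)
      (fun heq => hm ?_))
    have hmem : (inr m : TrivSqZeroExt R M) ∈
        (idealProd P N'.1 (fun a ha m => N'.2.1 (Submodule.smul_mem_smul ha trivial)) :
          Submodule (TrivSqZeroExt R M) (TrivSqZeroExt R M)) :=
      ⟨by simp, by simpa using hm'⟩
    rw [← heq] at hmem
    simpa using hmem.2
  -- the upper-bound map
  have hU : ∃ U : Set.Icc (K : Submodule (TrivSqZeroExt R M) (TrivSqZeroExt R M)) CA →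
      Set.Icc (P : Submodule R R) Br × Set.Icc PM Bm, StrictMono U := by
    have hf1 : ∀ X : Set.Icc (K : Submodule (TrivSqZeroExt R M) (TrivSqZeroExt R M)) CA,
        (P : Submodule R R) ≤ fstProj X.1 := by
      intro X a ha
      refine ⟨0, ?_⟩
      have h0 : (inl a + inr 0 : TrivSqZeroExt R M) = inl a := by simp
      rw [h0]
      exact X.2.1 ⟨by simpa using ha, by simp⟩
    have hf2 : ∀ X : Set.Icc (K : Submodule (TrivSqZeroExt R M) (TrivSqZeroExt R M)) CA,
        fstProj X.1 ≤ Br := by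
      rintro X a ⟨m, hma⟩ r hr
      have h1 := X.2.2 hma (inl r) ((mem_maximalIdeal_tsze _).2 (by simpa using hr))
      rw [smul_eq_mul] at h1
      have h2 := h1.1
      rw [fst_mul] at h2
      simpa using h2
    have hg1 : ∀ X : Set.Icc (K : Submodule (TrivSqZeroExt R M) (TrivSqZeroExt R M)) CA,
        PM ≤ sndProj X.1 := by
      intro X m hm
      exact X.2.1 ⟨by simp, by simpa using hm⟩
    have hg2 : ∀ X : Set.Icc (K : Submodule (TrivSqZeroExt R M) (TrivSqZeroExt R M)) CA,
        sndProj X.1 ≤ Bm := by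
      intro X m hm r hr
      have h1 := X.2.2 hm (inl r) ((mem_maximalIdeal_tsze _).2 (by simpa using hr))
      rw [smul_eq_mul, inl_mul_inr] at h1
      simpa using h1.2
    refine ⟨fun X => (⟨fstProj X.1, hf1 X, hf2 X⟩, ⟨sndProj X.1, hg1 X, hg2 X⟩), ?_⟩
    intro X Y hXY
    have hle : X.1 ≤ Y.1 := Subtype.coe_le_coe.mpr hXY.le
    refine lt_of_le_of_ne ⟨Subtype.mk_le_mk.mpr (fstProj_mono hle),
      Subtype.mk_le_mk.mpr (sndProj_mono hle)⟩ (fun heq => hXY.ne ?_)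
    have e1 : fstProj X.1 = fstProj Y.1 := congrArg (Subtype.val ∘ Prod.fst) heq
    have e2 : sndProj X.1 = sndProj Y.1 := congrArg (Subtype.val ∘ Prod.snd) heq
    exact Subtype.ext (eq_of_proj_eq hle e1 e2)
  obtain ⟨L, hLmono⟩ := hL
  obtain ⟨U, hUmono⟩ := hU
  haveI : Nonempty (Set.Icc (P : Submodule R R) Br) :=
    ⟨⟨(P : Submodule R R), le_rfl, le_modColon _ _⟩⟩
  haveI : Nonempty (Set.Icc PM Bm) := ⟨⟨PM, le_rfl, le_modColon _ _⟩⟩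
  constructor
  · rw [indexOfReducibility_eq_icc, indexOfReducibility_eq_icc, hpow]
    exact Order.krullDim_le_of_strictMono L hLmono
  · rw [indexOfReducibility_eq_icc, indexOfReducibility_eq_icc, indexOfReducibility_eq_icc, hpow]
    exact le_trans (Order.krullDim_le_of_strictMono U hUmono) krullDim_prod_le
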